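/- arXiv:1809.10836 — 2 statements merged into one kernel-verified Lean document; each statement's English description precedes it below -/
import Mathlib

section
/- In B_4, for all integers v, w, y ≥ 0 and x, z ≥ 1, the braid σ_{1,2}^{−1} σ_{2,4}^{v} σ_{2,3}^{w} σ_{1,3}^{x} σ_{3,4}^{y} σ_{2,4}^{z} is conjugate in B_4 to σ_{2,3}^{v} σ_{3,4}^{−1} σ_{2,3}^{w} σ_{1,3}^{x} σ_{3,4}^{y+1} σ_{2,3}^{z−1} σ_{1,3}^{−1} σ_{2,3}. -/
/-- Relations for the braid group `Bₙ`: the generator `k : Fin (n-1)` represents `σ_{k+1}`,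
and we impose `σ_i σ_j = σ_j σ_i` for `|i - j| > 1` and `σ_i σ_{i+1} σ_i = σ_{i+1} σ_i σ_{i+1}`. -/
def braidRels (n : ℕ) : Set (FreeGroup (Fin (n - 1))) :=
  {r | ∃ i j : Fin (n - 1), (i : ℕ) + 1 < (j : ℕ) ∧
      r = FreeGroup.of i * FreeGroup.of j * (FreeGroup.of i)⁻¹ * (FreeGroup.of j)⁻¹} ∪
  {r | ∃ i j : Fin (n - 1), (j : ℕ) = (i : ℕ) + 1 ∧
      r = FreeGroup.of i * FreeGroup.of j * FreeGroup.of i *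
          (FreeGroup.of j * FreeGroup.of i * FreeGroup.of j)⁻¹}

/-- The braid group on `n` strands, presented with generators `σ_1, …, σ_{n-1}`. -/
abbrev BraidGroup (n : ℕ) : Type := PresentedGroup (braidRels n)

/-- The standard generator `σ_i` of `Bₙ`, for `1 ≤ i ≤ n - 1` (junk value `1` otherwise). -/
def sigma (n i : ℕ) : BraidGroup n :=
  if h : 1 ≤ i ∧ i ≤ n - 1 then PresentedGroup.of ⟨i - 1, by omega⟩ else 1

/-- The word `σ_{j-1} σ_{j-2} ⋯ σ_{i+1}`. -/
def bandConj (n i j : ℕ) : BraidGroup n :=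
  ((List.range (j - 1 - i)).map fun t => sigma n (j - 1 - t)).prod

/-- The band generator `σ_{i,j} = (σ_{j-1} σ_{j-2} ⋯ σ_{i+1}) σ_i (σ_{j-1} σ_{j-2} ⋯ σ_{i+1})⁻¹`.
In particular `σ_{i,i+1} = σ_i`. -/
def band (n i j : ℕ) : BraidGroup n :=
  bandConj n i j * sigma n i * (bandConj n i j)⁻¹

/-- The set of band generators `σ_{i,j}`, `1 ≤ i < j ≤ n`, of `Bₙ`. -/
def bandGens (n : ℕ) : Set (BraidGroup n) :=
  {x | ∃ i j : ℕ, 1 ≤ i ∧ i < j ∧ j ≤ n ∧ x = band n i j}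

/-- A braid is strongly quasipositive if it is a product of band generators, i.e. lies in the
submonoid generated by the `σ_{i,j}`, `1 ≤ i < j ≤ n`. -/
def StronglyQuasipositive (n : ℕ) (x : BraidGroup n) : Prop :=
  x ∈ Submonoid.closure (bandGens n)

/-- A braid is quasipositive if it lies in the submonoid generated by all conjugates
`α σ_k α⁻¹` of the standard generators. -/
def Quasipositive (n : ℕ) (x : BraidGroup n) : Prop :=
  x ∈ Submonoid.closure
    {x : BraidGroup n | ∃ (α : BraidGroup n) (k : ℕ), 1 ≤ k ∧ k ≤ n - 1 ∧ x = α * sigma n k * α⁻¹}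

private lemma band12 : band 4 1 2 = sigma 4 1 := by simp [band, bandConj]
private lemma band23 : band 4 2 3 = sigma 4 2 := by simp [band, bandConj]
private lemma band34 : band 4 3 4 = sigma 4 3 := by simp [band, bandConj]
private lemma band13 : band 4 1 3 = sigma 4 2 * sigma 4 1 * (sigma 4 2)⁻¹ := by
  simp [band, bandConj, List.range_succ]
private lemma band24 : band 4 2 4 = sigma 4 3 * sigma 4 2 * (sigma 4 3)⁻¹ := by
  simp [band, bandConj, List.range_succ]

private lemma sigma13_comm : sigma 4 1 * sigma 4 3 = sigma 4 3 * sigma 4 1 := by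
  have h : (FreeGroup.of (0:Fin 3) * FreeGroup.of (2:Fin 3) * (FreeGroup.of (0:Fin 3))⁻¹ *
      (FreeGroup.of (2:Fin 3))⁻¹) ∈ braidRels 4 := Or.inl ⟨0, 2, by decide, rfl⟩
  have h1 : (PresentedGroup.mk (braidRels 4)) (FreeGroup.of (0:Fin 3) * FreeGroup.of (2:Fin 3) *
      (FreeGroup.of (0:Fin 3))⁻¹ * (FreeGroup.of (2:Fin 3))⁻¹) = 1 :=
    (QuotientGroup.eq_one_iff _).2 (Subgroup.subset_normalClosure h)
  simp only [map_mul, map_inv] at h1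
  have h2 : PresentedGroup.of (rels := braidRels 4) 0 * PresentedGroup.of 2 *
      (PresentedGroup.of 0)⁻¹ * (PresentedGroup.of 2)⁻¹ = 1 := h1
  rw [mul_inv_eq_one, mul_inv_eq_iff_eq_mul] at h2
  have e1 : sigma 4 1 = PresentedGroup.of (rels := braidRels 4) 0 := by simp [sigma]
  have e3 : sigma 4 3 = PresentedGroup.of (rels := braidRels 4) 2 := by simp [sigma]
  rw [e1, e3, h2]

/-- In `B₄`, for `v, w, y ≥ 0` and `x, z ≥ 1`, the braid
`σ_{1,2}⁻¹ σ_{2,4}^v σ_{2,3}^w σ_{1,3}^x σ_{3,4}^y σ_{2,4}^z` is conjugate to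
`σ_{2,3}^v σ_{3,4}⁻¹ σ_{2,3}^w σ_{1,3}^x σ_{3,4}^{y+1} σ_{2,3}^{z-1} σ_{1,3}⁻¹ σ_{2,3}`. -/
theorem flype_form_conjugate (v w y x z : ℕ) (hx : 1 ≤ x) (hz : 1 ≤ z) :
    ∃ α : BraidGroup 4,
      α * ((band 4 1 2)⁻¹ * band 4 2 4 ^ v * band 4 2 3 ^ w * band 4 1 3 ^ x *
          band 4 3 4 ^ y * band 4 2 4 ^ z) * α⁻¹ =
        band 4 2 3 ^ v * (band 4 3 4)⁻¹ * band 4 2 3 ^ w * band 4 1 3 ^ x *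
          band 4 3 4 ^ (y + 1) * band 4 2 3 ^ (z - 1) * (band 4 1 3)⁻¹ * band 4 2 3 := by
  obtain ⟨z, rfl⟩ : ∃ z', z = z' + 1 := ⟨z - 1, by omega⟩
  set A := sigma 4 1
  set B := sigma 4 2
  set C := sigma 4 3
  refine ⟨A * C⁻¹, ?_⟩
  rw [band12, band23, band34, band13, band24, conj_pow, conj_pow, conj_pow,
    Nat.add_sub_cancel]
  have hc : Commute A C := sigma13_comm
  rw [hc.inv_right.eq]
  group
  have key : sigma 4 3 ^ (-1 : ℤ) * (A ^ (-1 : ℤ) * C) = sigma 4 1 ^ (-1 : ℤ) := by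
    show C ^ (-1 : ℤ) * (A ^ (-1 : ℤ) * C) = A ^ (-1 : ℤ)
    simp only [zpow_neg, zpow_one]
    rw [hc.inv_left.eq, ← mul_assoc, inv_mul_cancel, one_mul]
  simp only [mul_assoc]
  rw [key]
  simp only [A, C]
  group
end

section
/- In B_4, if β', β'', β''' are strongly quasipositive braids (possibly trivial), then the braid σ_{1,3}^{−1} σ_{2,4} β' σ_{2,3} β'' σ_{1,2} β''' is quasipositive. -/
private lemma mk_rel {n : ℕ} {r : FreeGroup (Fin (n-1))} (h : r ∈ braidRels n) :
    PresentedGroup.mk (braidRels n) r = 1 :=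
  (QuotientGroup.eq_one_iff r).mpr (Subgroup.subset_normalClosure h)

private lemma braid_rel {n : ℕ} (i j : Fin (n-1)) (h : (j:ℕ) = (i:ℕ) + 1) :
    (PresentedGroup.of i : BraidGroup n) * PresentedGroup.of j * PresentedGroup.of i
      = PresentedGroup.of j * PresentedGroup.of i * PresentedGroup.of j := by
  have h1 := mk_rel (n := n) (Or.inr ⟨i, j, h, rfl⟩)
  simp only [map_mul, map_inv] at h1
  have := mul_eq_one_iff_eq_inv.mp h1
  simpa [PresentedGroup.of] using this

private lemma qp_conj {n : ℕ} {x : BraidGroup n} (g : BraidGroup n)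
    (hx : Quasipositive n x) : Quasipositive n (g * x * g⁻¹) := by
  unfold Quasipositive at *
  induction hx using Submonoid.closure_induction with
  | mem y hy =>
    obtain ⟨α, k, h1, h2, rfl⟩ := hy
    exact Submonoid.subset_closure ⟨g * α, k, h1, h2, by group⟩
  | one => simpa using Submonoid.one_mem _
  | mul y z _ _ hy hz =>
    have e : g * (y * z) * g⁻¹ = (g * y * g⁻¹) * (g * z * g⁻¹) := by group
    rw [e]; exact Submonoid.mul_mem _ hy hz

private lemma sqp_qp {n : ℕ} {x : BraidGroup n} (hx : StronglyQuasipositive n x) :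
    Quasipositive n x := by
  refine Submonoid.closure_mono ?_ hx
  rintro y ⟨i, j, h1, h2, h3, rfl⟩
  exact ⟨bandConj n i j, i, h1, by omega, rfl⟩

private lemma band_qp {n i j : ℕ} (h1 : 1 ≤ i) (h2 : i < j) (h3 : j ≤ n) :
    Quasipositive n (band n i j) :=
  Submonoid.subset_closure ⟨bandConj n i j, i, h1, by omega, rfl⟩

/-- In `B₄`, for strongly quasipositive `β', β'', β'''`, the braid
`σ_{1,3}⁻¹ σ_{2,4} β' σ_{2,3} β'' σ_{1,2} β'''` is quasipositive. -/
theorem claim_case2_s23 (β' β'' β''' : BraidGroup 4)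
    (hβ' : StronglyQuasipositive 4 β') (hβ'' : StronglyQuasipositive 4 β'')
    (hβ''' : StronglyQuasipositive 4 β''') :
    Quasipositive 4
      ((band 4 1 3)⁻¹ * band 4 2 4 * β' * band 4 2 3 * β'' * band 4 1 2 * β''') := by
  have hb13 : band 4 1 3 = sigma 4 2 * sigma 4 1 * (sigma 4 2)⁻¹ := by
    simp [band, bandConj, List.range_succ]
  have hb24 : band 4 2 4 = sigma 4 3 * sigma 4 2 * (sigma 4 3)⁻¹ := by
    simp [band, bandConj, List.range_succ]
  have hb23 : band 4 2 3 = sigma 4 2 := by simp [band, bandConj]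
  have hb12 : band 4 1 2 = sigma 4 1 := by simp [band, bandConj]
  set a := sigma 4 1 with ha
  set b := sigma 4 2 with hb
  set c := sigma 4 3 with hc
  have hrel : a * b * a = b * a * b := by
    have hA : a = (PresentedGroup.of ⟨0, by norm_num⟩ : BraidGroup 4) := rfl
    have hB : b = (PresentedGroup.of ⟨1, by norm_num⟩ : BraidGroup 4) := rfl
    rw [hA, hB]
    exact braid_rel _ _ rfl
  have h1 : b⁻¹ * a * (b * a * b⁻¹) = a := by
    calc b⁻¹ * a * (b * a * b⁻¹) = b⁻¹ * (a * b * a) * b⁻¹ := by group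
      _ = b⁻¹ * (b * a * b) * b⁻¹ := by rw [hrel]
      _ = a := by group
  have key : (band 4 1 3)⁻¹ * band 4 2 4 * β' * band 4 2 3 * β'' * band 4 1 2 * β'''
      = (b*a*b⁻¹)⁻¹ * (c*b*c⁻¹ * β' * (b*β''*b⁻¹) * a * ((b*a*b⁻¹)*β'''*(b*a*b⁻¹)⁻¹))
          * ((b*a*b⁻¹)⁻¹)⁻¹ := by
    rw [hb13, hb24, hb23, hb12]
    have h2 : (b*a*b⁻¹)⁻¹ * (c*b*c⁻¹ * β' * (b*β''*b⁻¹) * a * ((b*a*b⁻¹)*β'''*(b*a*b⁻¹)⁻¹))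
          * ((b*a*b⁻¹)⁻¹)⁻¹
        = (b*a*b⁻¹)⁻¹ * (c*b*c⁻¹) * β' * b * β'' * (b⁻¹ * a * (b*a*b⁻¹)) * β''' := by
      group
    rw [h2, h1]
  rw [key]
  refine qp_conj _ ?_
  have qa : Quasipositive 4 a := Submonoid.subset_closure ⟨1, 1, le_refl 1, by norm_num, by group; exact ha⟩
  have q24 : Quasipositive 4 (c * b * c⁻¹) := by
    rw [← hb24]; exact band_qp (by norm_num) (by norm_num) (by norm_num)
  exact Submonoid.mul_mem _ (Submonoid.mul_mem _ (Submonoid.mul_mem _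
    (Submonoid.mul_mem _ q24 (sqp_qp hβ')) (qp_conj b (sqp_qp hβ''))) qa)
    (qp_conj (b*a*b⁻¹) (sqp_qp hβ'''))
end
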